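/- Fix $\alpha, \gamma > 0$ with $\alpha > \gamma/(2\gamma+1)$. Consider minimizing $E(h,h',M,M') = h'^{2\alpha} + 1/M + h^{2\gamma}/M'$ over positive reals $h,h',M,M'$ subject to the cost constraint $M/h + M'/h' = C$. Then the minimum value $E^*$ satisfies $E^* \le K\, C^{-\frac{4\alpha\gamma + 2\alpha}{4\alpha\gamma + 2\alpha + 1}}$ for a constant $K$ depending only on $\alpha,\gamma$, achieved by choosing $h = C^{-1/(4\alpha\gamma+2\alpha+1)}$, $h' = C^{-(2\gamma+1)/(4\alpha\gamma+2\alpha+1)}$, $M = C h$, $M' = C^{(4\alpha\gamma+2\alpha-2\gamma)/(4\alpha\gamma+2\alpha+1)}$ (up to constants). -/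

import Mathlib

/-- Optimization underlying Proposition 1: minimizing
`h'^{2α} + 1/M + h^{2γ}/M'` under the cost constraint `M/h + M'/h' = C`
yields a minimum value bounded by `K C^{-(4αγ+2α)/(4αγ+2α+1)}` with `K`
depending only on `α, γ`. -/
theorem stmt13 (α γ : ℝ) (hα : 0 < α) (hγ : 0 < γ)
    (hαγ : γ / (2 * γ + 1) < α) :
    ∃ K > 0, ∀ C : ℝ, 1 ≤ C →
      sInf {e : ℝ | ∃ h h' M M' : ℝ, 0 < h ∧ 0 < h' ∧ 0 < M ∧ 0 < M' ∧
          M / h + M' / h' = C ∧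
          e = h' ^ (2 * α) + 1 / M + h ^ (2 * γ) / M'}
        ≤ K * C ^ (-(4 * α * γ + 2 * α) / (4 * α * γ + 2 * α + 1)) := by
  refine ⟨5, by norm_num, ?_⟩
  intro C hC
  have hC0 : (0:ℝ) < C := lt_of_lt_of_le one_pos hC
  set D : ℝ := 4 * α * γ + 2 * α + 1 with hDdef
  have hD : 0 < D := by positivity
  have hDne : D ≠ 0 := ne_of_gt hD
  set h : ℝ := C ^ (-1 / D) with hhdef
  set h' : ℝ := C ^ (-(2 * γ + 1) / D) with hh'def
  have hpos : 0 < h := Real.rpow_pos_of_pos hC0 _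
  have h'pos : 0 < h' := Real.rpow_pos_of_pos hC0 _
  set M : ℝ := h * (C / 2) with hMdef
  set M' : ℝ := h' * (C / 2) with hM'def
  have hMpos : 0 < M := by positivity
  have hM'pos : 0 < M' := by positivity
  have hCpow : ∀ x : ℝ, C ^ x * (C / 2) = C ^ (x + 1) / 2 := by
    intro x
    rw [Real.rpow_add hC0, Real.rpow_one]; ring
  apply csInf_le
  · refine ⟨0, ?_⟩
    rintro e ⟨a, b, c, d, ha, hb, hc, hd, _, rfl⟩
    positivity
  · refine ⟨h, h', M, M', hpos, h'pos, hMpos, hM'pos, ?_, ?_⟩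
    · rw [hMdef, hM'def, mul_div_cancel_left₀ _ (ne_of_gt hpos),
        mul_div_cancel_left₀ _ (ne_of_gt h'pos)]
      ring
    · have e1 : h' ^ (2 * α) = C ^ (-(4 * α * γ + 2 * α) / D) := by
        rw [hh'def, ← Real.rpow_mul hC0.le]
        congr 1
        field_simp
        ring
      have e2 : 1 / M = 2 * C ^ (-(4 * α * γ + 2 * α) / D) := by
        rw [hMdef, hhdef, hCpow, one_div_div, div_eq_mul_inv,
          ← Real.rpow_neg hC0.le]
        congr 1
        rw [hDdef]
        field_simp
        ring_nf
      have e3 : h ^ (2 * γ) / M' = 2 * C ^ (-(4 * α * γ + 2 * α) / D) := by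
        rw [hhdef, hM'def, hh'def, hCpow, ← Real.rpow_mul hC0.le,
          div_div_eq_mul_div, mul_comm, mul_div_assoc, ← Real.rpow_sub hC0]
        congr 2
        rw [hDdef]
        field_simp
        ring
      rw [e1, e2, e3]
      ring
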